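/- arXiv:chao-dyn/9303006 — 6 statements merged into one kernel-verified Lean document; each statement's English description precedes it below -/
import Mathlib

section
/- A factor of a dynamical system with chaotic limits has chaotic limits: if φ : (X,f) → (Y,g) is a surjective homomorphism of dynamical systems and (X,f) has chaotic limits, then (Y,g) has chaotic limits. -/
open Set Function Topology

/-- The ω-limit set of a set `A` under `f`: `ω(A) = ⋂ₙ closure (⋃_{m>n} f^m(A))`. -/
def omegaSet {X : Type*} [TopologicalSpace X] (f : X → X) (A : Set X) : Set X :=
  ⋂ n : ℕ, closure (⋃ m : ℕ, ⋃ _ : n < m, f^[m] '' A)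

/-- A dynamical system is chaotic if its periodic points are dense and it is
topologically transitive. -/
def IsChaotic {X : Type*} [TopologicalSpace X] (f : X → X) : Prop :=
  Dense {x : X | ∃ n : ℕ, 0 < n ∧ f^[n] x = x} ∧
  ∀ U V : Set X, IsOpen U → IsOpen V → U.Nonempty → V.Nonempty →
    ∃ k : ℕ, 0 < k ∧ (f^[k] '' U ∩ V).Nonempty

/-- `f` restricted to the invariant set `S` is a chaotic dynamical system. -/
def ChaoticOn {X : Type*} [TopologicalSpace X] (f : X → X) (S : Set X) : Prop :=
  ∃ h : MapsTo f S S, IsChaotic (MapsTo.restrict f S S h)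

/-- A system has chaotic limits if every point belongs to a set whose ω-limit set is
a chaotic system. -/
def HasChaoticLimits {X : Type*} [TopologicalSpace X] (f : X → X) : Prop :=
  ∀ x : X, ∃ A : Set X, x ∈ A ∧ ChaoticOn f (omegaSet f A)

/-- A factor of a chaotic system is chaotic. -/
lemma isChaotic_of_factor {X Y : Type*} [TopologicalSpace X] [TopologicalSpace Y]
    (f : X → X) (g : Y → Y) (φ : X → Y) (hφ : Continuous φ)
    (hs : Surjective φ) (hc : Function.Semiconj φ f g) (hcf : IsChaotic f) : IsChaotic g := by
  constructor
  · -- dense periodic points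
    have hsub : φ '' {x : X | ∃ n : ℕ, 0 < n ∧ f^[n] x = x} ⊆
        {y : Y | ∃ n : ℕ, 0 < n ∧ g^[n] y = y} := by
      rintro _ ⟨x, ⟨n, hn, hx⟩, rfl⟩
      exact ⟨n, hn, by rw [← (hc.iterate_right n) x, hx]⟩
    have hdi : Dense (φ '' {x : X | ∃ n : ℕ, 0 < n ∧ f^[n] x = x}) := by
      rw [dense_iff_closure_eq]
      apply eq_univ_of_univ_subset
      calc univ = φ '' closure {x : X | ∃ n : ℕ, 0 < n ∧ f^[n] x = x} := by
            rw [hcf.1.closure_eq, image_univ, hs.range_eq]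
        _ ⊆ closure (φ '' _) := image_closure_subset_closure_image hφ
    exact hdi.mono hsub
  · intro U V hU hV hUne hVne
    obtain ⟨yU, hyU⟩ := hUne
    obtain ⟨yV, hyV⟩ := hVne
    obtain ⟨xU, rfl⟩ := hs yU
    obtain ⟨xV, rfl⟩ := hs yV
    obtain ⟨k, hk, z, ⟨x, hxU, rfl⟩, hzV⟩ :=
      hcf.2 (φ ⁻¹' U) (φ ⁻¹' V) (hU.preimage hφ) (hV.preimage hφ) ⟨xU, hyU⟩ ⟨xV, hyV⟩
    exact ⟨k, hk, φ (f^[k] x), ⟨φ x, hxU, ((hc.iterate_right k) x).symm⟩, hzV⟩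

lemma omegaSet_image {X Y : Type*} [MetricSpace X] [CompactSpace X] [MetricSpace Y]
    (f : X → X) (g : Y → Y) (φ : X → Y) (hφ : Continuous φ)
    (hc : Function.Semiconj φ f g) (A : Set X) :
    omegaSet g (φ '' A) = φ '' omegaSet f A := by
  set T : ℕ → Set X := fun n => ⋃ m : ℕ, ⋃ _ : n < m, f^[m] '' A with hT
  have him : ∀ n : ℕ, φ '' T n = ⋃ m : ℕ, ⋃ _ : n < m, g^[m] '' (φ '' A) := by
    intro n
    rw [hT]
    simp only [image_iUnion, image_image]
    exact iUnion_congr fun m => iUnion_congr fun _ =>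
      image_congr' fun a => (hc.iterate_right m) a
  have hTanti : ∀ {n k : ℕ}, n ≤ k → T k ⊆ T n := by
    intro n k hnk
    refine iUnion_subset fun m => iUnion_subset fun hm => ?_
    exact subset_iUnion_of_subset m (subset_iUnion_of_subset (lt_of_le_of_lt hnk hm)
      (subset_refl _))
  apply Subset.antisymm
  · -- ω_g (φ A) ⊆ φ '' ω_f A
    intro y hy
    have hyn : ∀ n : ℕ, ∃ x, x ∈ closure (T n) ∧ φ x = y := by
      intro n
      have h1 : y ∈ closure (⋃ m : ℕ, ⋃ _ : n < m, g^[m] '' (φ '' A)) := by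
        have := mem_iInter.mp hy n
        exact this
      rw [← him n] at h1
      have h2 : closure (φ '' T n) ⊆ φ '' closure (T n) := by
        apply closure_minimal (image_mono subset_closure)
        exact (isClosed_closure.isCompact.image hφ).isClosed
      obtain ⟨x, hx, hxy⟩ := h2 h1
      exact ⟨x, hx, hxy⟩
    set K : ℕ → Set X := fun n => closure (T n) ∩ φ ⁻¹' {y} with hK
    have hKne : ∀ n, (K n).Nonempty := fun n => by
      obtain ⟨x, hx, hxy⟩ := hyn n
      exact ⟨x, hx, hxy⟩
    have hKcl : ∀ n, IsClosed (K n) := fun n =>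
      isClosed_closure.inter (isClosed_singleton.preimage hφ)
    have hKc : ∀ n, IsCompact (K n) := fun n => (hKcl n).isCompact
    have hKdir : Directed (· ⊇ ·) K := by
      intro a b
      refine ⟨max a b, ?_, ?_⟩ <;>
        exact inter_subset_inter (closure_mono (hTanti (by omega))) (subset_refl _)
    obtain ⟨x, hx⟩ :=
      IsCompact.nonempty_iInter_of_directed_nonempty_isCompact_isClosed K hKdir hKne hKc hKcl
    have hx1 : x ∈ omegaSet f A := mem_iInter.mpr fun n => (mem_iInter.mp hx n).1
    have hx2 : φ x = y := (mem_iInter.mp hx 0).2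
    exact ⟨x, hx1, hx2⟩
  · rintro _ ⟨x, hx, rfl⟩
    refine mem_iInter.mpr fun n => ?_
    have h1 : φ x ∈ φ '' closure (T n) := mem_image_of_mem _ (mem_iInter.mp hx n)
    have h2 : φ '' closure (T n) ⊆ closure (φ '' T n) := image_closure_subset_closure_image hφ
    rw [him n] at h2
    exact h2 h1

/-- A factor of a system with chaotic limits has chaotic limits. -/
theorem hasChaoticLimits_of_factor {X Y : Type*} [MetricSpace X] [CompactSpace X]
    [MetricSpace Y] [CompactSpace Y] (f : X → X) (g : Y → Y) (φ : X → Y)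
    (hf : Continuous f) (hg : Continuous g) (hφ : Continuous φ)
    (hsurj : Function.Surjective φ) (hcomm : g ∘ φ = φ ∘ f)
    (hlim : HasChaoticLimits f) : HasChaoticLimits g := by
  have hsemi : Function.Semiconj φ f g := fun x => (congrFun hcomm x).symm
  intro y
  obtain ⟨x, rfl⟩ := hsurj y
  obtain ⟨A, hxA, hmap, hchaos⟩ := hlim x
  refine ⟨φ '' A, mem_image_of_mem _ hxA, ?_⟩
  set S := omegaSet f A with hS
  have hSeq : omegaSet g (φ '' A) = φ '' S := omegaSet_image f g φ hφ hsemi A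
  have hgmap : MapsTo g (omegaSet g (φ '' A)) (omegaSet g (φ '' A)) := by
    rw [hSeq]
    rintro _ ⟨z, hz, rfl⟩
    exact ⟨f z, hmap hz, hsemi z⟩
  refine ⟨hgmap, ?_⟩
  -- build the factor map between the restricted systems
  set ψ : S → (omegaSet g (φ '' A) : Set Y) :=
    fun z => ⟨φ z.1, by rw [hSeq]; exact mem_image_of_mem _ z.2⟩ with hψ
  apply isChaotic_of_factor (MapsTo.restrict f S S hmap) _ ψ
  · exact Continuous.subtype_mk (hφ.comp continuous_subtype_val) _
  · rintro ⟨_, hw⟩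
    rw [hSeq] at hw
    obtain ⟨z, hz, hzw⟩ := hw
    exact ⟨⟨z, hz⟩, Subtype.ext hzw⟩
  · intro z
    exact Subtype.ext (hsemi z.1)
  · exact hchaos
end

section
/- Every dynamical system on a nonempty compact metric space is a factor of a dynamical system on the Cantor space: for every continuous map g : Y → Y on a nonempty compact metric space Y there exist a continuous map f : 2^ℕ → 2^ℕ on the Cantor space 2^ℕ = {0,1}^ℕ (with the product topology) and a continuous surjection φ : 2^ℕ → Y such that φ ∘ f = g ∘ φ. -/
open Set Function Topology

lemma binary_sum : ∀ (M j : ℕ), j < 2 ^ M →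
    (∑ i ∈ Finset.range M, j / 2 ^ i % 2 * 2 ^ i) = j := by
  intro M
  induction M with
  | zero => intro j hj; interval_cases j; simp
  | succ M ih =>
    intro j hj
    rw [Finset.sum_range_succ']
    have e : ∀ i, j / 2 ^ (i + 1) % 2 * 2 ^ (i + 1) = 2 * (j / 2 / 2 ^ i % 2 * 2 ^ i) := by
      intro i
      rw [Nat.div_div_eq_div_mul, ← pow_succ']
      ring
    simp only [e]
    rw [← Finset.mul_sum, ih (j / 2) ((Nat.div_lt_iff_lt_mul two_pos).mpr (by rw [pow_succ] at hj; omega))]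
    simp
    omega

lemma cantor_surj (Y : Type*) [MetricSpace Y] [CompactSpace Y] [Nonempty Y] :
    ∃ π : (ℕ → Fin 2) → Y, Continuous π ∧ Surjective π := by
  obtain ⟨u, hu⟩ := TopologicalSpace.exists_dense_seq Y
  -- choose bit-lengths M n so that every point is (1/2)^n-close to some u j with j < 2^(M n)
  have hM : ∀ n : ℕ, ∃ M : ℕ, ∀ y : Y, ∃ j < 2 ^ M, dist y (u j) < (1 / 2 : ℝ) ^ n := by
    intro n
    have hpos : (0 : ℝ) < (1 / 2 : ℝ) ^ n := by positivity
    obtain ⟨t, ht⟩ := IsCompact.elim_finite_subcover isCompact_univ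
      (fun j : ℕ => Metric.ball (u j) ((1 / 2 : ℝ) ^ n)) (fun j => Metric.isOpen_ball)
      (fun y _ => by
        obtain ⟨j, hj⟩ := hu.exists_dist_lt y hpos
        exact mem_iUnion.2 ⟨j, Metric.mem_ball.2 hj⟩)
    refine ⟨t.sup id + 1, fun y => ?_⟩
    obtain ⟨j, hjt, hj⟩ := mem_iUnion₂.1 (ht (mem_univ y))
    exact ⟨j, (Nat.lt_succ_of_le (Finset.le_sup (f := id) hjt)).trans Nat.lt_two_pow_self,
      Metric.mem_ball.1 hj⟩
  choose M hMspec using hM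
  -- decoding of the n-th coordinate from the bits at positions pair n i
  set d : ℕ → (ℕ → Fin 2) → ℕ := fun n c => ∑ i ∈ Finset.range (M n), (c (Nat.pair n i) : ℕ) * 2 ^ i with hd
  have d_loc : ∀ (n : ℕ) (c c' : ℕ → Fin 2),
      (∀ i < M n, c' (Nat.pair n i) = c (Nat.pair n i)) → d n c' = d n c := by
    intro n c c' h
    exact Finset.sum_congr rfl fun i hi => by rw [h i (Finset.mem_range.1 hi)]
  set s : Set (ℕ → Fin 2) :=
    {c | (⋂ n, Metric.closedBall (u (d n c)) ((1 / 2 : ℝ) ^ n)).Nonempty} with hs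
  have A : ∀ (c : ℕ → Fin 2) (hc : c ∈ s) (n : ℕ),
      dist hc.some (u (d n c)) ≤ (1 / 2 : ℝ) ^ n := fun c hc n =>
    (mem_iInter.1 hc.some_mem n : _)
  -- the map on s
  set G : s → Y := fun x => x.2.some with hG
  have Gdist : ∀ (x : s) (n : ℕ), dist (G x) (u (d n x.1)) ≤ (1 / 2 : ℝ) ^ n := fun x n => A x.1 x.2 n
  -- continuity of G
  have G_cont : Continuous G := by
    rw [continuous_iff_continuousAt]
    intro x
    rw [ContinuousAt, Metric.tendsto_nhds]
    intro ε hε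
    obtain ⟨n, hn⟩ : ∃ n : ℕ, (1 / 2 : ℝ) ^ n + (1 / 2) ^ n < ε := by
      obtain ⟨n, hn⟩ := exists_pow_lt_of_lt_one (half_pos hε) (by norm_num : (1 / 2 : ℝ) < 1)
      exact ⟨n, by linarith⟩
    have hV : IsOpen {c : ℕ → Fin 2 | ∀ i < M n, c (Nat.pair n i) = x.1 (Nat.pair n i)} := by
      have : {c : ℕ → Fin 2 | ∀ i < M n, c (Nat.pair n i) = x.1 (Nat.pair n i)}
          = ⋂ i ∈ Finset.range (M n), (fun c : ℕ → Fin 2 => c (Nat.pair n i)) ⁻¹' {x.1 (Nat.pair n i)} := by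
        ext c; simp [Set.mem_iInter]
      rw [this]
      exact isOpen_biInter_finset fun i _ =>
        (continuous_apply (Nat.pair n i)).isOpen_preimage _ (isOpen_discrete _)
    have hmem : x.1 ∈ {c : ℕ → Fin 2 | ∀ i < M n, c (Nat.pair n i) = x.1 (Nat.pair n i)} :=
      fun i _ => rfl
    have : {c : ℕ → Fin 2 | ∀ i < M n, c (Nat.pair n i) = x.1 (Nat.pair n i)} ∈ 𝓝 x.1 :=
      hV.mem_nhds hmem
    have hnb : (Subtype.val) ⁻¹' {c : ℕ → Fin 2 | ∀ i < M n, c (Nat.pair n i) = x.1 (Nat.pair n i)}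
        ∈ 𝓝 x := continuousAt_subtype_val.preimage_mem_nhds this
    filter_upwards [hnb] with z hz
    have hdz : d n z.1 = d n x.1 := d_loc n x.1 z.1 hz
    calc dist (G z) (G x) ≤ dist (G z) (u (d n z.1)) + dist (G x) (u (d n x.1)) := by
          rw [hdz]; exact dist_triangle_right _ _ _
      _ ≤ (1 / 2 : ℝ) ^ n + (1 / 2) ^ n := add_le_add (Gdist z n) (Gdist x n)
      _ < ε := hn
  -- s is closed
  have s_closed : IsClosed s := by
    refine isClosed_of_closure_subset fun c hc => ?_
    set T : ℕ → Set Y := fun K => ⋂ n ∈ Finset.range (K + 1),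
      Metric.closedBall (u (d n c)) ((1 / 2 : ℝ) ^ n) with hT
    have T_closed : ∀ K, IsClosed (T K) := fun K =>
      isClosed_biInter fun n _ => Metric.isClosed_closedBall
    have T_anti : ∀ K, T (K + 1) ⊆ T K := fun K =>
      biInter_subset_biInter_left (fun n hn => Finset.mem_range.2
        ((Finset.mem_range.1 hn).trans (Nat.lt_succ_self _)))
    have T_ne : ∀ K, (T K).Nonempty := by
      intro K
      set L : ℕ := (Finset.range (K + 1)).sup
        (fun n => (Finset.range (M n)).sup (fun i => Nat.pair n i)) + 1 with hL
      have hV : IsOpen {x : ℕ → Fin 2 | ∀ k < L, x k = c k} := by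
        have : {x : ℕ → Fin 2 | ∀ k < L, x k = c k}
            = ⋂ k ∈ Finset.range L, (fun x : ℕ → Fin 2 => x k) ⁻¹' {c k} := by
          ext x; simp [Set.mem_iInter]
        rw [this]
        exact isOpen_biInter_finset fun k _ =>
          (continuous_apply k).isOpen_preimage _ (isOpen_discrete _)
      obtain ⟨y, hyV, hys⟩ := mem_closure_iff.1 hc _ hV (fun k _ => rfl)
      have hdy : ∀ n ≤ K, d n y = d n c := by
        intro n hn
        refine d_loc n c y fun i hi => hyV _ ?_
        calc Nat.pair n i ≤ (Finset.range (M n)).sup (fun i => Nat.pair n i) :=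
              Finset.le_sup (Finset.mem_range.2 hi)
          _ ≤ (Finset.range (K + 1)).sup
              (fun n => (Finset.range (M n)).sup (fun i => Nat.pair n i)) :=
              Finset.le_sup (f := fun n => (Finset.range (M n)).sup (fun i => Nat.pair n i))
                (Finset.mem_range.2 (Nat.lt_succ_of_le hn))
          _ < L := Nat.lt_succ_self _
      refine ⟨hys.some, mem_iInter₂.2 fun n hn => ?_⟩
      have := mem_iInter.1 hys.some_mem n
      rwa [hdy n (Nat.lt_succ_iff.1 (Finset.mem_range.1 hn))] at this
    obtain ⟨w, hw⟩ := IsCompact.nonempty_iInter_of_sequence_nonempty_isCompact_isClosed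
      T T_anti T_ne ((T_closed 0).isCompact) T_closed
    refine ⟨w, mem_iInter.2 fun n => ?_⟩
    exact mem_iInter₂.1 (mem_iInter.1 hw n) n (Finset.mem_range.2 (Nat.lt_succ_self n))
  -- every y has a preimage in s
  have key : ∀ y : Y, ∃ (c : ℕ → Fin 2) (hc : c ∈ s), G ⟨c, hc⟩ = y := by
    intro y
    choose j hjlt hjd using fun n => hMspec n y
    set c : ℕ → Fin 2 := fun k =>
      ⟨j k.unpair.1 / 2 ^ k.unpair.2 % 2, Nat.mod_lt _ two_pos⟩ with hc
    have dnc : ∀ n, d n c = j n := by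
      intro n
      have hco : ∀ i, (c (Nat.pair n i) : ℕ) = j n / 2 ^ i % 2 := by
        intro i; simp [hc, Nat.unpair_pair]
      calc d n c = ∑ i ∈ Finset.range (M n), j n / 2 ^ i % 2 * 2 ^ i :=
            Finset.sum_congr rfl fun i _ => by rw [hco]
        _ = j n := binary_sum (M n) (j n) (hjlt n)
    have hcs : c ∈ s := ⟨y, mem_iInter.2 fun n => by
      rw [dnc]; exact Metric.mem_closedBall.2 (hjd n).le⟩
    refine ⟨c, hcs, ?_⟩
    have J : ∀ n : ℕ, dist (G ⟨c, hcs⟩) y ≤ (1 / 2 : ℝ) ^ n + (1 / 2) ^ n := by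
      intro n
      calc dist (G ⟨c, hcs⟩) y ≤ dist (G ⟨c, hcs⟩) (u (d n c)) + dist y (u (d n c)) :=
            dist_triangle_right _ _ _
        _ ≤ (1 / 2 : ℝ) ^ n + (1 / 2) ^ n := by
            refine add_le_add (Gdist ⟨c, hcs⟩ n) ?_
            rw [dnc]; exact (hjd n).le
    refine dist_le_zero.1 ?_
    have L : Filter.Tendsto (fun n : ℕ => (1 / 2 : ℝ) ^ n + (1 / 2) ^ n) Filter.atTop (𝓝 (0 + 0)) :=
      (tendsto_pow_atTop_nhds_zero_of_lt_one (by norm_num) (by norm_num)).add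
        (tendsto_pow_atTop_nhds_zero_of_lt_one (by norm_num) (by norm_num))
    rw [add_zero] at L
    exact ge_of_tendsto' L J
  -- retraction and conclusion
  obtain ⟨y₀⟩ := (inferInstance : Nonempty Y)
  obtain ⟨c₀, hc₀, -⟩ := key y₀
  obtain ⟨r, hrid, hrsurj, hrcont⟩ :=
    PiNat.exists_retraction_subtype_of_isClosed s_closed ⟨c₀, hc₀⟩
  refine ⟨G ∘ r, G_cont.comp hrcont, fun y => ?_⟩
  obtain ⟨c, hcs, hGy⟩ := key y
  obtain ⟨z, hz⟩ := hrsurj ⟨c, hcs⟩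
  exact ⟨z, by simp [Function.comp, hz, hGy]⟩

/-- The Cantor space is homeomorphic to a countable power of itself. -/
noncomputable def cantorPow : (ℕ → Fin 2) ≃ₜ (ℕ → (ℕ → Fin 2)) where
  toFun c n i := c (Nat.pair n i)
  invFun x k := x k.unpair.1 k.unpair.2
  left_inv c := by ext k; simp
  right_inv x := by ext n i; simp
  continuous_toFun := by
    apply continuous_pi; intro n; apply continuous_pi; intro i
    exact continuous_apply _
  continuous_invFun := by
    apply continuous_pi; intro k
    exact Continuous.comp (continuous_apply (Nat.unpair k).2) (continuous_apply (Nat.unpair k).1)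

/-- Every dynamical system on a nonempty compact metric space is a factor of a
dynamical system on the Cantor space `2^ℕ = {0,1}^ℕ`. -/
theorem factor_of_cantor_system {Y : Type*} [MetricSpace Y] [CompactSpace Y]
    [Nonempty Y] (g : Y → Y) (hg : Continuous g) :
    ∃ (f : (ℕ → Fin 2) → (ℕ → Fin 2)) (φ : (ℕ → Fin 2) → Y),
      Continuous f ∧ Continuous φ ∧ Function.Surjective φ ∧ φ ∘ f = g ∘ φ := by
  obtain ⟨π, hπc, hπs⟩ := cantor_surj Y
  set e := cantorPow with he
  -- the closed set of π-orbits
  set X : Set (ℕ → (ℕ → Fin 2)) := {x | ∀ n, π (x (n + 1)) = g (π (x n))} with hX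
  have X_closed : IsClosed X := by
    have : X = ⋂ n, {x : ℕ → (ℕ → Fin 2) | π (x (n + 1)) = g (π (x n))} := by
      ext x; simp [hX, Set.mem_iInter]
    rw [this]
    exact isClosed_iInter fun n => isClosed_eq (hπc.comp (continuous_apply (n + 1)))
      (hg.comp (hπc.comp (continuous_apply n)))
  set S : Set (ℕ → Fin 2) := e ⁻¹' X with hS
  have S_closed : IsClosed S := X_closed.preimage e.continuous
  -- membership in X of orbit lifts
  have orbit_mem : ∀ y : Y, ∃ c ∈ S, π (e c 0) = y := by
    intro y
    set x : ℕ → (ℕ → Fin 2) := fun n => (hπs (g^[n] y)).choose with hx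
    have hxspec : ∀ n, π (x n) = g^[n] y := fun n => (hπs (g^[n] y)).choose_spec
    have hxX : x ∈ X := by
      intro n
      rw [hxspec, hxspec, Function.iterate_succ_apply']
    refine ⟨e.symm x, ?_, ?_⟩
    · show e (e.symm x) ∈ X
      rwa [e.apply_symm_apply]
    · rw [e.apply_symm_apply, hxspec, Function.iterate_zero_apply]
  have S_ne : S.Nonempty := by
    obtain ⟨c, hc, -⟩ := orbit_mem (Classical.arbitrary Y)
    exact ⟨c, hc⟩
  obtain ⟨r, hrid, hrrange, hrcont⟩ := PiNat.exists_retraction_of_isClosed S_closed S_ne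
  have hrS : ∀ z, r z ∈ S := fun z => hrrange ▸ mem_range_self z
  -- shift conjugated by e
  set σ : (ℕ → Fin 2) → (ℕ → Fin 2) := fun c => e.symm (fun n => e c (n + 1)) with hσ
  have σ_cont : Continuous σ :=
    e.symm.continuous.comp (continuous_pi fun n => (continuous_apply (n + 1)).comp e.continuous)
  have σS : ∀ c ∈ S, σ c ∈ S := by
    intro c hc
    show e (e.symm _) ∈ X
    rw [e.apply_symm_apply]
    intro n
    exact hc (n + 1)
  refine ⟨σ ∘ r, fun c => π (e (r c) 0), σ_cont.comp hrcont,
    hπc.comp ((continuous_apply 0).comp (e.continuous.comp hrcont)), ?_, ?_⟩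
  · intro y
    obtain ⟨c, hc, hy⟩ := orbit_mem y
    exact ⟨c, by show π (e (r c) 0) = y; rw [hrid c hc]; exact hy⟩
  · ext c
    have h1 : r (σ (r c)) = σ (r c) := hrid _ (σS _ (hrS c))
    simp only [Function.comp_apply]; rw [h1]; simp only [hσ, e.apply_symm_apply]
    exact hrS c 0
end

section
/- Every finite automaton has chaotic limits: for the dynamical system (X,f) of a finite automaton over nonempty finite sets (A,Q,B) with input function f_A and output function f_B, for every u ∈ X there exists a set W ⊆ X with u ∈ W such that ω(W) with the restriction of f is a chaotic dynamical system. -/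
open Set Function Topology

/-- The discontinuum over `A, Q, B`: two-sided sequences with letters from `A` at
positive coordinates, a letter from `Q` at coordinate `0`, and letters from `B` at
negative coordinates. -/
def Discontinuum (A Q B : Type*) : Type _ :=
  {u : ℤ → A ⊕ Q ⊕ B //
    (∀ i : ℤ, 0 < i → ∃ a : A, u i = Sum.inl a) ∧
    (∃ q : Q, u 0 = Sum.inr (Sum.inl q)) ∧
    (∀ i : ℤ, i < 0 → ∃ b : B, u i = Sum.inr (Sum.inr b))}

/-- The topology of the discontinuum: the product topology of the discrete topologies,
i.e. the topology of the metric ρ(u,v) = 2^{-inf{i ≥ 0 : uᵢ ≠ vᵢ or u₋ᵢ ≠ v₋ᵢ}}. -/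
instance (A Q B : Type*) : TopologicalSpace (Discontinuum A Q B) := by
  letI : TopologicalSpace (A ⊕ Q ⊕ B) := ⊥
  unfold Discontinuum
  infer_instance

/-- The inner state of the automaton, i.e. the coordinate `u 0`. -/
noncomputable def Discontinuum.state {A Q B : Type*} (u : Discontinuum A Q B) : Q :=
  u.2.2.1.choose

/-- The next input symbol, i.e. the coordinate `u 1`. -/
noncomputable def Discontinuum.input {A Q B : Type*} (u : Discontinuum A Q B) : A :=
  (u.2.1 1 one_pos).choose

/-- The dynamical system of a finite automaton with input function `fA` and output
function `fB`: it reads a symbol from the input tape, changes its state, and writes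
a symbol to the output tape. -/
noncomputable def autMap {A Q B : Type*} (fA : Q × A → Q) (fB : Q → B)
    (u : Discontinuum A Q B) : Discontinuum A Q B :=
  ⟨fun i =>
    if i = -1 then Sum.inr (Sum.inr (fB u.state))
    else if i = 0 then Sum.inr (Sum.inl (fA (u.state, u.input)))
    else u.1 (i + 1), by
      refine ⟨fun i hi => ?_, ?_, fun i hi => ?_⟩
      · beta_reduce
        rw [if_neg (by omega), if_neg (by omega)]
        exact u.2.1 (i + 1) (by omega)
      · exact ⟨fA (u.state, u.input), by beta_reduce; rw [if_neg (by norm_num), if_pos rfl]⟩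
      · by_cases h : i = -1
        · exact ⟨fB u.state, by beta_reduce; rw [if_pos h]⟩
        · beta_reduce
          rw [if_neg h, if_neg (by omega)]
          exact u.2.2.2 (i + 1) (by omega)⟩

/-- A dynamical system `g` is a factor of a finite automaton if there are nonempty
finite sets `A, Q, B`, input and output functions `fA, fB`, and a continuous
surjection `φ` from the corresponding finite automaton onto `(Y, g)` with
`g ∘ φ = φ ∘ f`. -/
def IsFactorOfFiniteAutomaton {Y : Type*} [TopologicalSpace Y] (g : Y → Y) : Prop :=
  ∃ (A Q B : Type) (_ : Fintype A) (_ : Fintype Q) (_ : Fintype B)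
    (_ : Nonempty A) (_ : Nonempty Q) (_ : Nonempty B)
    (fA : Q × A → Q) (fB : Q → B) (φ : Discontinuum A Q B → Y),
    Continuous φ ∧ Surjective φ ∧ g ∘ φ = φ ∘ autMap fA fB

set_option linter.unusedSectionVars false

namespace ChaoticAux

variable {A Q B : Type} [Fintype A] [Fintype Q] [Fintype B]
  [Nonempty A] [Nonempty Q] [Nonempty B]

theorem dext {u v : Discontinuum A Q B} (h : ∀ i, u.1 i = v.1 i) : u = v :=
  Subtype.ext (funext h)

theorem state_spec (u : Discontinuum A Q B) : u.1 0 = Sum.inr (Sum.inl u.state) :=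
  u.2.2.1.choose_spec

theorem input_spec (u : Discontinuum A Q B) : u.1 1 = Sum.inl u.input :=
  (u.2.1 1 one_pos).choose_spec

theorem state_eq {u : Discontinuum A Q B} {q : Q} (h : u.1 0 = Sum.inr (Sum.inl q)) :
    u.state = q := by
  have h2 := state_spec u
  rw [h] at h2
  exact (Sum.inl_injective (Sum.inr_injective h2)).symm

theorem input_eq {u : Discontinuum A Q B} {a : A} (h : u.1 1 = Sum.inl a) :
    u.input = a := by
  have h2 := input_spec u
  rw [h] at h2
  exact (Sum.inl_injective h2).symm

variable (fA : Q × A → Q) (fB : Q → B)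

theorem autMap_apply (u : Discontinuum A Q B) (i : ℤ) :
    (autMap fA fB u).1 i =
      if i = -1 then Sum.inr (Sum.inr (fB u.state))
      else if i = 0 then Sum.inr (Sum.inl (fA (u.state, u.input)))
      else u.1 (i + 1) := rfl

theorem autMap_neg_one (u : Discontinuum A Q B) :
    (autMap fA fB u).1 (-1) = Sum.inr (Sum.inr (fB u.state)) := by
  rw [autMap_apply, if_pos rfl]

theorem autMap_zero (u : Discontinuum A Q B) :
    (autMap fA fB u).1 0 = Sum.inr (Sum.inl (fA (u.state, u.input))) := by
  rw [autMap_apply, if_neg (by omega), if_pos rfl]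

theorem autMap_other (u : Discontinuum A Q B) (i : ℤ) (h1 : i ≠ -1) (h2 : i ≠ 0) :
    (autMap fA fB u).1 i = u.1 (i + 1) := by
  rw [autMap_apply, if_neg h1, if_neg h2]

theorem autMap_state (u : Discontinuum A Q B) :
    (autMap fA fB u).state = fA (u.state, u.input) :=
  state_eq (autMap_zero fA fB u)

/-- state trajectory -/
noncomputable def st (u : Discontinuum A Q B) (n : ℕ) : Q := ((autMap fA fB)^[n] u).state

/-- input trajectory -/
noncomputable def ia (u : Discontinuum A Q B) (n : ℕ) : A := ((autMap fA fB)^[n] u).input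

theorem st_succ (u : Discontinuum A Q B) (n : ℕ) :
    st fA fB u (n + 1) = fA (st fA fB u n, ia fA fB u n) := by
  unfold st ia
  rw [Function.iterate_succ_apply', autMap_state]

theorem iter_pos (u : Discontinuum A Q B) (m : ℕ) (i : ℤ) (hi : 1 ≤ i) :
    ((autMap fA fB)^[m] u).1 i = u.1 (i + m) := by
  induction m generalizing i with
  | zero => simp
  | succ m ih =>
    rw [Function.iterate_succ_apply', autMap_other fA fB _ i (by omega) (by omega),
      ih (i + 1) (by omega)]
    congr 1
    push_cast
    ring

theorem iter_zero (u : Discontinuum A Q B) (m : ℕ) :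
    ((autMap fA fB)^[m] u).1 0 = Sum.inr (Sum.inl (st fA fB u m)) :=
  state_spec _

theorem iter_one (u : Discontinuum A Q B) (m : ℕ) :
    u.1 (1 + m) = Sum.inl (ia fA fB u m) := by
  rw [← iter_pos fA fB u m 1 le_rfl]
  exact input_spec _

theorem iter_neg (u : Discontinuum A Q B) (m : ℕ) (j : ℕ) (h1 : 1 ≤ j) (h2 : j ≤ m) :
    ((autMap fA fB)^[m] u).1 (-(j : ℤ)) = Sum.inr (Sum.inr (fB (st fA fB u (m - j)))) := by
  induction m generalizing j with
  | zero => omega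
  | succ m ih =>
    rw [Function.iterate_succ_apply']
    rcases eq_or_lt_of_le h1 with h | h
    · rw [← h]
      push_cast
      rw [autMap_neg_one]
      rfl
    · rw [autMap_other fA fB _ _ (by omega) (by omega)]
      have hc : (-(j : ℤ)) + 1 = -((j - 1 : ℕ) : ℤ) := by
        have : ((j - 1 : ℕ) : ℤ) = (j : ℤ) - 1 := by
          push_cast [Nat.cast_sub (by omega : 1 ≤ j)]; ring
        omega
      rw [hc, ih (j - 1) (by omega) (by omega)]
      have : m - (j - 1) = m + 1 - j := by omega
      rw [this]

end ChaoticAux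

namespace ChaoticAux

variable {A Q B : Type} [Fintype A] [Fintype Q] [Fintype B]
  [Nonempty A] [Nonempty Q] [Nonempty B] (fA : Q × A → Q) (fB : Q → B)

/-- The set of edges occurring infinitely often in the trajectory of `u`. -/
def E (u : Discontinuum A Q B) : Set (Q × A) :=
  {e | ∀ N : ℕ, ∃ n : ℕ, N ≤ n ∧ (st fA fB u n, ia fA fB u n) = e}

theorem exists_N0 (u : Discontinuum A Q B) :
    ∃ N0 : ℕ, ∀ n, N0 ≤ n → (st fA fB u n, ia fA fB u n) ∈ E fA fB u := by
  classical
  have key : ∀ e : Q × A, e ∉ E fA fB u →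
      ∃ K, ∀ n, K ≤ n → (st fA fB u n, ia fA fB u n) ≠ e := by
    intro e he
    simp only [E, mem_setOf_eq] at he
    push_neg at he
    exact he
  choose! K hK using key
  refine ⟨Finset.univ.sup K, fun n hn => ?_⟩
  by_contra he
  exact hK _ he n (le_trans (Finset.le_sup (Finset.mem_univ _)) hn) rfl

theorem connect (u : Discontinuum A Q B) {e e' : Q × A}
    (he : e ∈ E fA fB u) (he' : e' ∈ E fA fB u) :
    ∃ (ℓ : ℕ) (c : ℕ → Q) (β : ℕ → A), 1 ≤ ℓ ∧ c 0 = fA e ∧ c ℓ = e'.1 ∧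
      ∀ t, t < ℓ → (c t, β t) ∈ E fA fB u ∧ fA (c t, β t) = c (t + 1) := by
  obtain ⟨N0, hN0⟩ := exists_N0 fA fB u
  obtain ⟨n, hn, hne⟩ := he N0
  obtain ⟨m, hm, hme⟩ := he' (n + 2)
  refine ⟨m - (n + 1), fun t => st fA fB u (n + 1 + t), fun t => ia fA fB u (n + 1 + t),
    by omega, ?_, ?_, fun t ht => ⟨hN0 _ (by omega), (st_succ fA fB u (n + 1 + t)).symm⟩⟩
  · show st fA fB u (n + 1) = fA e
    rw [st_succ, hne]
  · show st fA fB u (n + 1 + (m - (n + 1))) = e'.1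
    have hh : n + 1 + (m - (n + 1)) = m := by omega
    rw [hh, ← hme]

/-- Construct a point of the discontinuum from a two-sided state path and input path. -/
noncomputable def pt (p : ℤ → Q) (α : ℤ → A) : Discontinuum A Q B :=
  ⟨fun i => if 1 ≤ i then Sum.inl (α (i - 1)) else if i = 0 then Sum.inr (Sum.inl (p 0))
      else Sum.inr (Sum.inr (fB (p i))), by
    refine ⟨fun i hi => ⟨α (i - 1), by beta_reduce; rw [if_pos (by omega)]⟩,
      ⟨p 0, by beta_reduce; rw [if_neg (by omega), if_pos rfl]⟩,
      fun i hi => ⟨fB (p i), by beta_reduce; rw [if_neg (by omega), if_neg (by omega)]⟩⟩⟩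

theorem pt_apply (p : ℤ → Q) (α : ℤ → A) (i : ℤ) :
    (pt fB p α).1 i = if 1 ≤ i then Sum.inl (α (i - 1))
      else if i = 0 then Sum.inr (Sum.inl (p 0)) else Sum.inr (Sum.inr (fB (p i))) := rfl

theorem pt_pos (p : ℤ → Q) (α : ℤ → A) (i : ℤ) (hi : 1 ≤ i) :
    (pt fB p α).1 i = Sum.inl (α (i - 1)) := by
  rw [pt_apply, if_pos hi]

theorem pt_zero (p : ℤ → Q) (α : ℤ → A) :
    (pt fB p α).1 0 = Sum.inr (Sum.inl (p 0)) := by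
  rw [pt_apply, if_neg (by omega), if_pos rfl]

theorem pt_neg (p : ℤ → Q) (α : ℤ → A) (i : ℤ) (hi : i ≤ -1) :
    (pt fB p α).1 i = Sum.inr (Sum.inr (fB (p i))) := by
  rw [pt_apply, if_neg (by omega), if_neg (by omega)]

theorem pt_state (p : ℤ → Q) (α : ℤ → A) : (pt fB p α).state = p 0 :=
  state_eq (pt_zero fB p α)

theorem pt_input (p : ℤ → Q) (α : ℤ → A) : (pt fB p α).input = α 0 :=
  input_eq (by rw [pt_pos fB p α 1 le_rfl]; norm_num)

theorem pt_congr {p p' : ℤ → Q} {α α' : ℤ → A} (hp : ∀ j, p j = p' j)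
    (ha : ∀ j, α j = α' j) : pt fB p α = pt fB p' α' := by
  have h1 : p = p' := funext hp
  have h2 : α = α' := funext ha
  rw [h1, h2]

theorem autMap_pt (p : ℤ → Q) (α : ℤ → A) (h : fA (p 0, α 0) = p 1) :
    autMap fA fB (pt fB p α) = pt fB (fun j => p (j + 1)) (fun j => α (j + 1)) := by
  apply dext
  intro i
  rcases lt_trichotomy i 0 with hi | hi | hi
  · rcases eq_or_lt_of_le (by omega : i ≤ -1) with h1 | h1
    · rw [h1, autMap_neg_one, pt_state, pt_neg fB _ _ (-1) le_rfl]
      beta_reduce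
      norm_num
    · rw [autMap_other fA fB _ _ (by omega) (by omega), pt_neg fB _ _ _ (by omega),
        pt_neg fB _ _ _ (by omega)]
  · subst hi
    rw [autMap_zero, pt_state, pt_input, pt_zero]
    beta_reduce
    rw [zero_add, h]
  · rw [autMap_other fA fB _ _ (by omega) (by omega), pt_pos fB _ _ _ (by omega),
      pt_pos fB _ _ _ (by omega)]
    beta_reduce
    congr 2
    omega

theorem iter_pt (p : ℤ → Q) (α : ℤ → A) (h : ∀ j, fA (p j, α j) = p (j + 1)) (m : ℕ) :
    (autMap fA fB)^[m] (pt fB p α) =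
      pt fB (fun j => p (j + m)) (fun j => α (j + m)) := by
  induction m with
  | zero => simp
  | succ m ih =>
    rw [Function.iterate_succ_apply', ih,
      autMap_pt fA fB _ _ (by beta_reduce; rw [zero_add, h]; congr 1; ring)]
    refine pt_congr fB (fun j => ?_) (fun j => ?_) <;>
      · beta_reduce
        congr 1
        push_cast
        ring

def Adm (u : Discontinuum A Q B) (p : ℤ → Q) (α : ℤ → A) : Prop :=
  ∀ j : ℤ, (p j, α j) ∈ E fA fB u ∧ fA (p j, α j) = p (j + 1)

def Sig (u : Discontinuum A Q B) : Set (Discontinuum A Q B) :=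
  {v | ∃ p α, Adm fA fB u p α ∧ v = pt fB p α}

theorem mapsTo_Sig (u : Discontinuum A Q B) :
    MapsTo (autMap fA fB) (Sig fA fB u) (Sig fA fB u) := by
  rintro v ⟨p, α, hadm, rfl⟩
  refine ⟨fun j => p (j + 1), fun j => α (j + 1), fun j => ⟨(hadm (j + 1)).1, ?_⟩,
    autMap_pt fA fB p α (hadm 0).2⟩
  exact (hadm (j + 1)).2

theorem image_Sig (u : Discontinuum A Q B) :
    autMap fA fB '' Sig fA fB u = Sig fA fB u := by
  apply Subset.antisymm ((mapsTo_Sig fA fB u).image_subset)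
  rintro v ⟨p, α, hadm, rfl⟩
  refine ⟨pt fB (fun j => p (j - 1)) (fun j => α (j - 1)),
    ⟨fun j => p (j - 1), fun j => α (j - 1), fun j => ⟨(hadm (j - 1)).1, ?_⟩, rfl⟩, ?_⟩
  · have hh := (hadm (j - 1)).2
    rw [hh]
    congr 1
    omega
  · rw [autMap_pt fA fB _ _ (by beta_reduce; rw [(hadm (0 - 1)).2]; norm_num)]
    exact pt_congr fB (fun j => by beta_reduce; congr 1; omega)
      (fun j => by beta_reduce; congr 1; omega)

theorem iter_image_Sig (u : Discontinuum A Q B) (m : ℕ) :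
    (autMap fA fB)^[m] '' Sig fA fB u = Sig fA fB u := by
  induction m with
  | zero => simp
  | succ m ih =>
    rw [Function.iterate_succ', Set.image_comp, ih, image_Sig]


/-- Cylinder sets are open. -/
theorem cyl_isOpen (v : Discontinuum A Q B) (N : ℕ) :
    IsOpen {w : Discontinuum A Q B | ∀ i : ℤ, i.natAbs ≤ N → w.1 i = v.1 i} := by
  letI : TopologicalSpace (A ⊕ Q ⊕ B) := ⊥
  haveI : DiscreteTopology (A ⊕ Q ⊕ B) := ⟨rfl⟩
  have hset : {w : Discontinuum A Q B | ∀ i : ℤ, i.natAbs ≤ N → w.1 i = v.1 i}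
      = ⋂ i ∈ Finset.Icc (-(N : ℤ)) N, (fun w : Discontinuum A Q B => w.1 i) ⁻¹' {v.1 i} := by
    ext w
    simp only [Set.mem_setOf_eq, Set.mem_iInter, Set.mem_preimage, Set.mem_singleton_iff,
      Finset.mem_Icc]
    constructor
    · intro h i hi
      exact h i (by omega)
    · intro h i hi
      exact h i (by omega)
  rw [hset]
  refine isOpen_biInter_finset fun i _ => ?_
  exact (((continuous_apply i).comp continuous_subtype_val).isOpen_preimage _ (isOpen_discrete _))

/-- Every open neighborhood contains a cylinder. -/
theorem cyl_basis (v : Discontinuum A Q B) (O : Set (Discontinuum A Q B)) (hO : IsOpen O)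
    (hv : v ∈ O) :
    ∃ N : ℕ, ∀ w : Discontinuum A Q B, (∀ i : ℤ, i.natAbs ≤ N → w.1 i = v.1 i) → w ∈ O := by
  letI : TopologicalSpace (A ⊕ Q ⊕ B) := ⊥
  haveI : DiscreteTopology (A ⊕ Q ⊕ B) := ⟨rfl⟩
  have hind : Topology.IsInducing (Subtype.val : Discontinuum A Q B → (ℤ → A ⊕ Q ⊕ B)) :=
    Topology.IsInducing.subtypeVal
  have hmem : O ∈ 𝓝 v := hO.mem_nhds hv
  rw [show 𝓝 v = Filter.comap Subtype.val (𝓝 v.1) from hind.nhds_eq_comap v] at hmem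
  replace hmem := Filter.mem_comap.1 hmem
  obtain ⟨S, hS, hSO⟩ := hmem
  rw [nhds_pi] at hS
  rw [Filter.mem_pi] at hS
  obtain ⟨I, hIfin, t, ht, hsub⟩ := hS
  simp only [nhds_discrete, Filter.mem_pure] at ht
  have hbdd : ∃ N : ℕ, ∀ i ∈ I, i.natAbs ≤ N := by
    obtain ⟨N, hN⟩ := (hIfin.image Int.natAbs).bddAbove
    exact ⟨N, fun i hi => hN (Set.mem_image_of_mem _ hi)⟩
  obtain ⟨N, hN⟩ := hbdd
  refine ⟨N, fun w hw => ?_⟩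
  apply hSO
  apply hsub
  intro i hi
  rw [hw i (hN i hi)]
  exact ht i

/-- The key compactness lemma: a point approximated on every window by admissible-like
configurations lies in `Sig`. -/
theorem mem_Sig_of_approx (u v : Discontinuum A Q B)
    (H : ∀ N : ℕ, ∃ (p : ℤ → Q) (α : ℤ → A),
      (∀ j : ℤ, j.natAbs ≤ N → fA (p j, α j) = p (j + 1)) ∧
      (∀ j : ℤ, j.natAbs ≤ N → ∃ n : ℕ, N ≤ n ∧ (st fA fB u n, ia fA fB u n) = (p j, α j)) ∧
      (∀ i : ℤ, i.natAbs ≤ N → v.1 i = (pt fB p α).1 i)) :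
    v ∈ Sig fA fB u := by
  classical
  letI : TopologicalSpace Q := ⊥
  letI : TopologicalSpace A := ⊥
  haveI : DiscreteTopology Q := ⟨rfl⟩
  haveI : DiscreteTopology A := ⟨rfl⟩
  choose p α h1 h2 h3 using H
  set g : ℕ → (ℤ → Q) × (ℤ → A) := fun N => (p N, α N) with hg
  obtain ⟨y, hy⟩ := exists_clusterPt_of_compactSpace (Filter.map g Filter.atTop)
  have hy' : MapClusterPt y Filter.atTop g := hy
  have hfreq : ∀ (J : Finset ℤ) (K : ℕ), ∃ N, K ≤ N ∧
      ∀ j ∈ J, p N j = y.1 j ∧ α N j = y.2 j := by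
    intro J K
    have hU : {z : (ℤ → Q) × (ℤ → A) | ∀ j ∈ J, z.1 j = y.1 j ∧ z.2 j = y.2 j} ∈ 𝓝 y := by
      refine IsOpen.mem_nhds ?_ (fun j _ => ⟨rfl, rfl⟩)
      have hset : {z : (ℤ → Q) × (ℤ → A) | ∀ j ∈ J, z.1 j = y.1 j ∧ z.2 j = y.2 j}
          = ⋂ j ∈ J, ((fun z : (ℤ → Q) × (ℤ → A) => z.1 j) ⁻¹' {y.1 j} ∩
              (fun z : (ℤ → Q) × (ℤ → A) => z.2 j) ⁻¹' {y.2 j}) := by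
        ext z
        simp [Set.mem_iInter, forall_and]
      rw [hset]
      refine isOpen_biInter_finset fun j _ => ?_
      exact (((continuous_apply j).comp continuous_fst).isOpen_preimage _ (isOpen_discrete _)).inter
        (((continuous_apply j).comp continuous_snd).isOpen_preimage _ (isOpen_discrete _))
    have := (mapClusterPt_iff_frequently.1 hy') _ hU
    obtain ⟨N, hNK, hNmem⟩ := Filter.frequently_atTop.1 this K
    exact ⟨N, hNK, hNmem⟩
  refine ⟨y.1, y.2, fun j => ⟨?_, ?_⟩, ?_⟩
  · -- (y.1 j, y.2 j) ∈ E
    intro K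
    obtain ⟨N, hNK, hagree⟩ := hfreq {j} (max K j.natAbs)
    obtain ⟨n, hn, hocc⟩ := h2 N j (by omega)
    obtain ⟨hpj, haj⟩ := hagree j (Finset.mem_singleton_self j)
    exact ⟨n, by omega, by rw [hocc, hpj, haj]⟩
  · -- chain
    obtain ⟨N, hNK, hagree⟩ := hfreq {j, j + 1} (j.natAbs + 2)
    obtain ⟨hpj, haj⟩ := hagree j (by simp)
    obtain ⟨hpj1, _⟩ := hagree (j + 1) (by simp)
    have := h1 N j (by omega)
    rw [hpj, haj, hpj1] at this
    exact this
  · -- v = pt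
    apply dext
    intro i
    obtain ⟨N, hNK, hagree⟩ := hfreq {i - 1, 0, i} (i.natAbs + 1)
    have hv := h3 N i (by omega)
    rw [hv]
    rcases lt_trichotomy i 0 with hi | hi | hi
    · rw [pt_neg fB _ _ _ (by omega), pt_neg fB _ _ _ (by omega),
        (hagree i (by simp)).1]
    · subst hi
      rw [pt_zero, pt_zero, (hagree 0 (by simp)).1]
    · rw [pt_pos fB _ _ _ (by omega), pt_pos fB _ _ _ (by omega),
        (hagree (i - 1) (by simp)).2]

theorem isClosed_Sig (u : Discontinuum A Q B) : IsClosed (Sig fA fB u) := by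
  refine isClosed_of_closure_subset fun v hv => ?_
  apply mem_Sig_of_approx
  intro N
  obtain ⟨w, hw1, hw2⟩ := mem_closure_iff.1 hv _ (cyl_isOpen v N) (fun i _ => rfl)
  obtain ⟨p, α, hadm, rfl⟩ := hw2
  refine ⟨p, α, fun j _ => (hadm j).2, fun j _ => ?_, fun i hi => (hw1 i hi).symm⟩
  obtain ⟨n, hn, hocc⟩ := (hadm j).1 N
  exact ⟨n, hn, hocc⟩


theorem omega_subset_Sig (u v : Discontinuum A Q B)
    (hv : ∀ n : ℕ, v ∈ closure (⋃ m : ℕ, ⋃ _ : n < m, {(autMap fA fB)^[m] u})) :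
    v ∈ Sig fA fB u := by
  apply mem_Sig_of_approx
  intro N
  obtain ⟨w, hw1, hw2⟩ := mem_closure_iff.1 (hv (2 * N + 1)) _ (cyl_isOpen v N) (fun i _ => rfl)
  simp only [Set.mem_iUnion, Set.mem_singleton_iff] at hw2
  obtain ⟨m, hm, rfl⟩ := hw2
  refine ⟨fun j => st fA fB u (m + j).toNat, fun j => ia fA fB u (m + j).toNat,
    fun j hj => ?_, fun j hj => ⟨(m + j).toNat, by omega, rfl⟩, fun i hi => ?_⟩
  · beta_reduce
    have hh : ((m : ℤ) + (j + 1)).toNat = (m + j).toNat + 1 := by omega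
    rw [hh, st_succ]
  · beta_reduce
    rw [← hw1 i hi]
    rcases lt_trichotomy i 0 with h | h | h
    · have hna : -((i.natAbs : ℕ) : ℤ) = i := by omega
      have h1 : 1 ≤ i.natAbs := by omega
      have h2 : i.natAbs ≤ m := by omega
      rw [← hna, iter_neg fA fB u m i.natAbs h1 h2, pt_neg fB _ _ _ (by omega)]
      have hh : m - i.natAbs = ((m : ℤ) + -((i.natAbs : ℕ) : ℤ)).toNat := by omega
      rw [hh]
    · subst h
      rw [iter_zero, pt_zero]
      have hh : ((m : ℤ) + 0).toNat = m := by omega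
      rw [hh]
    · rw [iter_pos fA fB u m i (by omega), pt_pos fB _ _ _ (by omega)]
      have hh : i + (m : ℤ) = 1 + (((m : ℤ) + (i - 1)).toNat : ℕ) := by omega
      rw [hh, iter_one]

theorem omega_eq (u : Discontinuum A Q B) :
    omegaSet (autMap fA fB) (insert u (Sig fA fB u)) = Sig fA fB u := by
  apply Set.Subset.antisymm
  · intro v hv
    simp only [omegaSet, Set.mem_iInter] at hv
    by_cases hvS : v ∈ Sig fA fB u
    · exact hvS
    · apply omega_subset_Sig
      intro n
      have hrew : (⋃ m : ℕ, ⋃ _ : n < m, (autMap fA fB)^[m] '' (insert u (Sig fA fB u)))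
          = (⋃ m : ℕ, ⋃ _ : n < m, {(autMap fA fB)^[m] u}) ∪ Sig fA fB u := by
        ext x
        simp only [Set.mem_iUnion, Set.mem_union, Set.mem_singleton_iff]
        constructor
        · rintro ⟨m, hm, hx⟩
          rw [Set.image_insert_eq, iter_image_Sig] at hx
          rcases hx with hx | hx
          · exact Or.inl ⟨m, hm, hx⟩
          · exact Or.inr hx
        · rintro (⟨m, hm, hx⟩ | hx)
          · exact ⟨m, hm, by rw [Set.image_insert_eq]; exact Or.inl hx⟩
          · exact ⟨n + 1, n.lt_succ_self, by
              rw [Set.image_insert_eq]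
              exact Or.inr (by rw [iter_image_Sig]; exact hx)⟩
      have hv' := hv n
      rw [hrew, closure_union, (isClosed_Sig fA fB u).closure_eq] at hv'
      rcases hv' with h | h
      · exact h
      · exact absurd h hvS
  · intro v hv
    simp only [omegaSet, Set.mem_iInter]
    intro n
    apply subset_closure
    refine Set.mem_iUnion.2 ⟨n + 1, Set.mem_iUnion.2 ⟨n.lt_succ_self, ?_⟩⟩
    rw [Set.image_insert_eq]
    exact Or.inr (by rw [iter_image_Sig]; exact hv)


theorem exists_periodic (u : Discontinuum A Q B) (O : Set (Discontinuum A Q B)) (hO : IsOpen O)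
    (x : Discontinuum A Q B) (hxO : x ∈ O) (hxS : x ∈ Sig fA fB u) :
    ∃ y ∈ Sig fA fB u, y ∈ O ∧ ∃ k : ℕ, 0 < k ∧ (autMap fA fB)^[k] y = y := by
  obtain ⟨N0, hN0⟩ := cyl_basis x O hO hxO
  obtain ⟨p, α, hadm, rfl⟩ := hxS
  set N := N0 + 1 with hNdef
  obtain ⟨ℓ, c, β, hℓ, hc0, hcl, hedge⟩ :=
    connect fA fB u (hadm ((N:ℤ) - 1)).1 (hadm (-(N:ℤ))).1
  have hc0' : c 0 = p (N : ℤ) := by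
    rw [hc0, (hadm ((N:ℤ) - 1)).2]
    congr 1
    omega
  set K := 2 * N + ℓ with hKdef
  have hK : 0 < K := by omega
  have hK' : (0 : ℤ) < (K : ℤ) := by exact_mod_cast hK
  set cyc : ℕ → Q := fun t => if t ≤ 2 * N then p ((t : ℤ) - N) else c (t - 2 * N) with hcyc
  set cycβ : ℕ → A := fun t => if t < 2 * N then α ((t : ℤ) - N) else β (t - 2 * N) with hcycβ
  have hcyc_lo : ∀ t : ℕ, t ≤ 2 * N → cyc t = p ((t : ℤ) - N) := by
    intro t ht
    rw [hcyc]
    beta_reduce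
    rw [if_pos ht]
  have hcyc_hi : ∀ t : ℕ, 2 * N ≤ t → cyc t = c (t - 2 * N) := by
    intro t ht
    rcases eq_or_lt_of_le ht with h | h
    · rw [hcyc_lo t (by omega), ← h]
      rw [show ((2 * N : ℕ) : ℤ) - (N : ℤ) = (N : ℤ) by push_cast; ring,
        show 2 * N - 2 * N = 0 from Nat.sub_self _, ← hc0']
    · rw [hcyc]
      beta_reduce
      rw [if_neg (by omega)]
  have hβ_lo : ∀ t : ℕ, t < 2 * N → cycβ t = α ((t : ℤ) - N) := by
    intro t ht
    rw [hcycβ]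
    beta_reduce
    rw [if_pos ht]
  have hβ_hi : ∀ t : ℕ, 2 * N ≤ t → cycβ t = β (t - 2 * N) := by
    intro t ht
    rw [hcycβ]
    beta_reduce
    rw [if_neg (by omega)]
  have hcycK : cyc K = cyc 0 := by
    rw [hcyc_hi K (by omega), hcyc_lo 0 (by omega)]
    have h2 : K - 2 * N = ℓ := by omega
    rw [h2, hcl]
    show p (-(N:ℤ)) = p ((0:ℤ) - N)
    congr 1 <;> omega
  have hedgecyc : ∀ t : ℕ, t < K → (cyc t, cycβ t) ∈ E fA fB u ∧
      fA (cyc t, cycβ t) = cyc (t + 1) := by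
    intro t ht
    by_cases h : t < 2 * N
    · rw [hcyc_lo t (by omega), hβ_lo t h, hcyc_lo (t + 1) (by omega)]
      refine ⟨(hadm _).1, ?_⟩
      rw [(hadm _).2]
      congr 1
      omega
    · rw [hcyc_hi t (by omega), hβ_hi t (by omega), hcyc_hi (t + 1) (by omega)]
      refine ⟨(hedge (t - 2 * N) (by omega)).1, ?_⟩
      rw [(hedge (t - 2 * N) (by omega)).2]
      congr 1
      omega
  have hmodlt : ∀ z : ℤ, 0 ≤ z % (K : ℤ) ∧ z % (K : ℤ) < K :=
    fun z => ⟨Int.emod_nonneg z (by omega), Int.emod_lt_of_pos z hK'⟩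
  have hsucc : ∀ z : ℤ, ((z + 1) % (K : ℤ)).toNat =
      if ((z % (K : ℤ)).toNat + 1 = K) then 0 else (z % (K : ℤ)).toNat + 1 := by
    intro z
    have h1 := hmodlt z
    have hz : z + 1 = z % (K : ℤ) + 1 + (K : ℤ) * (z / K) := by rw [Int.emod_def]; ring
    rw [hz, Int.add_mul_emod_self_left]
    by_cases h : z % (K : ℤ) + 1 = K
    · rw [if_pos (by omega), h, Int.emod_self]
      rfl
    · rw [if_neg (by omega), Int.emod_eq_of_lt (by omega) (by omega)]
      omega
  set pp : ℤ → Q := fun j => cyc (((j + N) % (K : ℤ)).toNat) with hpp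
  set aa : ℤ → A := fun j => cycβ (((j + N) % (K : ℤ)).toNat) with haa
  have hAdm : Adm fA fB u pp aa := by
    intro j
    have h1 := hmodlt (j + N)
    constructor
    · exact (hedgecyc ((j + (N : ℤ)) % (K : ℤ)).toNat (by omega)).1
    · show fA (cyc (((j + (N : ℤ)) % (K : ℤ)).toNat), cycβ (((j + (N : ℤ)) % (K : ℤ)).toNat))
        = cyc (((j + 1 + (N : ℤ)) % (K : ℤ)).toNat)
      rw [(hedgecyc _ (by omega)).2]
      have h2 : ((j + 1 + (N : ℤ)) % (K : ℤ)).toNat =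
          if (((j + (N : ℤ)) % (K : ℤ)).toNat + 1 = K) then 0
          else ((j + (N : ℤ)) % (K : ℤ)).toNat + 1 := by
        rw [show j + 1 + (N : ℤ) = j + N + 1 by ring]
        exact hsucc (j + N)
      rw [h2]
      by_cases hcase : ((j + (N : ℤ)) % (K : ℤ)).toNat + 1 = K
      · rw [if_pos hcase, hcase]
        exact hcycK
      · rw [if_neg hcase]
  have hper : (autMap fA fB)^[K] (pt fB pp aa) = pt fB pp aa := by
    rw [iter_pt fA fB pp aa (fun j => (hAdm j).2) K]
    refine pt_congr fB (fun j => ?_) (fun j => ?_) <;>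
    · beta_reduce
      simp only [hpp, haa]
      congr 2
      rw [show j + (K : ℤ) + N = (j + N) + (K : ℤ) * 1 by ring, Int.add_mul_emod_self_left]
  have hyO : pt fB pp aa ∈ O := by
    apply hN0
    intro i hi
    rcases lt_trichotomy i 0 with h | h | h
    · rw [pt_neg fB pp aa i (by omega), pt_neg fB p α i (by omega)]
      congr 3
      show cyc (((i + (N : ℤ)) % (K : ℤ)).toNat) = p i
      rw [Int.emod_eq_of_lt (by omega) (by omega), hcyc_lo _ (by omega)]
      congr 1
      omega
    · subst h
      rw [pt_zero, pt_zero]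
      congr 3
      show cyc ((((0 : ℤ) + (N : ℤ)) % (K : ℤ)).toNat) = p 0
      rw [Int.emod_eq_of_lt (by omega) (by omega), hcyc_lo _ (by omega)]
      congr 1
      omega
    · rw [pt_pos fB pp aa i (by omega), pt_pos fB p α i (by omega)]
      congr 2
      show cycβ (((i - 1 + (N : ℤ)) % (K : ℤ)).toNat) = α (i - 1)
      rw [Int.emod_eq_of_lt (by omega) (by omega), hβ_lo _ (by omega)]
      congr 1
      omega
  exact ⟨pt fB pp aa, ⟨pp, aa, hAdm, rfl⟩, hyO, K, hK, hper⟩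

theorem exists_transit (u : Discontinuum A Q B) (O1 O2 : Set (Discontinuum A Q B))
    (hO1 : IsOpen O1) (hO2 : IsOpen O2)
    (x1 : Discontinuum A Q B) (hx1O : x1 ∈ O1) (hx1S : x1 ∈ Sig fA fB u)
    (x2 : Discontinuum A Q B) (hx2O : x2 ∈ O2) (hx2S : x2 ∈ Sig fA fB u) :
    ∃ w ∈ Sig fA fB u, w ∈ O1 ∧ ∃ k : ℕ, 0 < k ∧
      (autMap fA fB)^[k] w ∈ O2 ∧ (autMap fA fB)^[k] w ∈ Sig fA fB u := by
  obtain ⟨N1, hN1⟩ := cyl_basis x1 O1 hO1 hx1O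
  obtain ⟨N2, hN2⟩ := cyl_basis x2 O2 hO2 hx2O
  obtain ⟨p, α, hadm, rfl⟩ := hx1S
  obtain ⟨p', α', hadm', rfl⟩ := hx2S
  set N := max N1 N2 + 1 with hNdef
  obtain ⟨ℓ, c, β, hℓ, hc0, hcl, hedge⟩ :=
    connect fA fB u (hadm ((N:ℤ) - 1)).1 (hadm' (-(N:ℤ))).1
  have hc0' : c 0 = p (N : ℤ) := by
    rw [hc0, (hadm ((N:ℤ) - 1)).2]
    congr 1
    omega
  set k := 2 * N + ℓ with hkdef
  set qt : ℤ → Q := fun j => if j ≤ (N : ℤ) then p j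
    else if j ≤ (N : ℤ) + ℓ then c (j - N).toNat else p' (j - k) with hqt
  set aq : ℤ → A := fun j => if j < (N : ℤ) then α j
    else if j < (N : ℤ) + ℓ then β (j - N).toNat else α' (j - k) with haq
  have hq1 : ∀ j : ℤ, j ≤ (N : ℤ) → qt j = p j := by
    intro j hj
    rw [hqt]
    beta_reduce
    rw [if_pos hj]
  have hq2 : ∀ j : ℤ, (N : ℤ) ≤ j → j ≤ (N : ℤ) + ℓ → qt j = c (j - N).toNat := by
    intro j hj1 hj2
    rcases eq_or_lt_of_le hj1 with h | h
    · rw [hq1 j (by omega), ← h,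
        show (((N : ℤ) - N).toNat) = 0 from by omega, ← hc0']
    · rw [hqt]
      beta_reduce
      rw [if_neg (by omega), if_pos hj2]
  have hq3 : ∀ j : ℤ, (N : ℤ) + ℓ ≤ j → qt j = p' (j - k) := by
    intro j hj
    rcases eq_or_lt_of_le hj with h | h
    · rw [hq2 j (by omega) (by omega), ← h]
      have h2 : ((N : ℤ) + ℓ - N).toNat = ℓ := by omega
      rw [h2, hcl]
      show p' (-(N:ℤ)) = p' ((N : ℤ) + ℓ - k)
      congr 1 <;> omega
    · rw [hqt]
      beta_reduce
      rw [if_neg (by omega), if_neg (by omega)]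
  have ha1 : ∀ j : ℤ, j < (N : ℤ) → aq j = α j := by
    intro j hj
    rw [haq]
    beta_reduce
    rw [if_pos hj]
  have ha2 : ∀ j : ℤ, (N : ℤ) ≤ j → j < (N : ℤ) + ℓ → aq j = β (j - N).toNat := by
    intro j hj1 hj2
    rw [haq]
    beta_reduce
    rw [if_neg (by omega), if_pos hj2]
  have ha3 : ∀ j : ℤ, (N : ℤ) + ℓ ≤ j → aq j = α' (j - k) := by
    intro j hj
    rw [haq]
    beta_reduce
    rw [if_neg (by omega), if_neg (by omega)]
  have hAdm : Adm fA fB u qt aq := by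
    intro j
    rcases lt_or_ge j (N : ℤ) with h | h
    · rw [hq1 j (by omega), ha1 j h, hq1 (j + 1) (by omega)]
      exact hadm j
    · rcases lt_or_ge j ((N : ℤ) + ℓ) with h2 | h2
      · rw [hq2 j h (by omega), ha2 j h h2]
        have ht : (j - (N : ℤ)).toNat < ℓ := by omega
        refine ⟨(hedge _ ht).1, ?_⟩
        rw [(hedge _ ht).2, hq2 (j + 1) (by omega) (by omega)]
        congr 1
        omega
      · rw [hq3 j h2, ha3 j h2, hq3 (j + 1) (by omega)]
        refine ⟨(hadm' _).1, ?_⟩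
        rw [(hadm' _).2]
        congr 1
        omega
  have hwO1 : pt fB qt aq ∈ O1 := by
    apply hN1
    intro i hi
    rcases lt_trichotomy i 0 with h | h | h
    · rw [pt_neg fB qt aq i (by omega), pt_neg fB p α i (by omega), hq1 i (by omega)]
    · subst h
      rw [pt_zero, pt_zero, hq1 0 (by omega)]
    · rw [pt_pos fB qt aq i (by omega), pt_pos fB p α i (by omega), ha1 (i - 1) (by omega)]
  have hiter : (autMap fA fB)^[k] (pt fB qt aq) =
      pt fB (fun j => qt (j + k)) (fun j => aq (j + k)) :=
    iter_pt fA fB qt aq (fun j => (hAdm j).2) k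
  have hwO2 : (autMap fA fB)^[k] (pt fB qt aq) ∈ O2 := by
    rw [hiter]
    apply hN2
    intro i hi
    rcases lt_trichotomy i 0 with h | h | h
    · rw [pt_neg fB _ _ i (by omega), pt_neg fB p' α' i (by omega)]
      congr 3
      beta_reduce
      rw [hq3 (i + k) (by omega)]
      congr 1
      omega
    · subst h
      rw [pt_zero, pt_zero]
      congr 3
      beta_reduce
      rw [hq3 ((0 : ℤ) + k) (by omega)]
      congr 1
      omega
    · rw [pt_pos fB _ _ i (by omega), pt_pos fB p' α' i (by omega)]
      congr 2
      beta_reduce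
      rw [ha3 (i - 1 + k) (by omega)]
      congr 1
      omega
  refine ⟨pt fB qt aq, ⟨qt, aq, hAdm, rfl⟩, hwO1, k, by omega, hwO2, ?_⟩
  have hmem : pt fB qt aq ∈ Sig fA fB u := ⟨qt, aq, hAdm, rfl⟩
  rw [← iter_image_Sig fA fB u k]
  exact Set.mem_image_of_mem _ hmem

end ChaoticAux

/-- Every finite automaton has chaotic limits: every point of the discontinuum
belongs to a set whose ω-limit set is a chaotic dynamical system. -/
theorem finiteAutomaton_hasChaoticLimits (A Q B : Type)
    [Fintype A] [Fintype Q] [Fintype B] [Nonempty A] [Nonempty Q] [Nonempty B]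
    (fA : Q × A → Q) (fB : Q → B) :
    HasChaoticLimits (autMap fA fB) := by
  intro u
  refine ⟨insert u (ChaoticAux.Sig fA fB u), Set.mem_insert u _, ?_⟩
  rw [ChaoticAux.omega_eq]
  refine ⟨ChaoticAux.mapsTo_Sig fA fB u, ?_, ?_⟩
  · rw [dense_iff_inter_open]
    intro U hU hUne
    obtain ⟨x, hxU⟩ := hUne
    obtain ⟨O, hO, hOU⟩ := isOpen_induced_iff.1 hU
    obtain ⟨y, hyS, hyO, k, hk, hper⟩ :=
      ChaoticAux.exists_periodic fA fB u O hO x.1 (by rw [← hOU] at hxU; exact hxU) x.2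
    refine ⟨⟨y, hyS⟩, ⟨?_, k, hk, ?_⟩⟩
    · rw [← hOU]
      exact hyO
    · apply Subtype.ext
      rw [MapsTo.coe_iterate_restrict]
      exact hper
  · intro U V hU hV hUne hVne
    obtain ⟨x1, hx1⟩ := hUne
    obtain ⟨x2, hx2⟩ := hVne
    obtain ⟨O1, hO1, hO1U⟩ := isOpen_induced_iff.1 hU
    obtain ⟨O2, hO2, hO2V⟩ := isOpen_induced_iff.1 hV
    obtain ⟨w, hwS, hwO1, k, hk, hwkO2, hwkS⟩ :=
      ChaoticAux.exists_transit fA fB u O1 O2 hO1 hO2 x1.1 (by rw [← hO1U] at hx1; exact hx1)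
        x1.2 x2.1 (by rw [← hO2V] at hx2; exact hx2) x2.2
    refine ⟨k, hk, ⟨_, Set.mem_image_of_mem _ (show (⟨w, hwS⟩ : _) ∈ U from ?_), ?_⟩⟩
    · rw [← hO1U]
      exact hwO1
    · show _ ∈ V
      rw [← hO2V]
      show Subtype.val _ ∈ O2
      rw [MapsTo.coe_iterate_restrict]
      exact hwkO2
end

section
/- Every subshift of finite type is a factor of a finite automaton: let A be a nonempty finite alphabet and M : A × A → {0,1} a matrix such that for every a ∈ A there exists b ∈ A with M(a,b) = 1. Let Σ_M = {u ∈ A^ℕ : ∀ i ≥ 0, M(u_i,u_{i+1}) = 1} with the shift map σ(u)_i = u_{i+1}. Then there exist finite sets A', Q, B, functions f_A : Q × A' → Q, f_B : Q → B, and a continuous surjection φ from the finite automaton (X,f) over (A',Q,B) onto (Σ_M,σ) with σ ∘ φ = φ ∘ f. -/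
open Set Function Topology

section Aux

variable {A Q B : Type*}

lemma Discontinuum.state_spec (u : Discontinuum A Q B) :
    u.1 0 = Sum.inr (Sum.inl u.state) := u.2.2.1.choose_spec

lemma Discontinuum.input_spec (u : Discontinuum A Q B) :
    u.1 1 = Sum.inl u.input := (u.2.1 1 one_pos).choose_spec

lemma Discontinuum.state_eq {u : Discontinuum A Q B} {q : Q}
    (h : u.1 0 = Sum.inr (Sum.inl q)) : u.state = q := by
  have h2 := u.state_spec
  rw [h] at h2
  simpa using h2.symm

lemma Discontinuum.input_eq {u : Discontinuum A Q B} {a : A}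
    (h : u.1 1 = Sum.inl a) : u.input = a := by
  have h2 := u.input_spec
  rw [h] at h2
  simpa using h2.symm

lemma autMap_coord (fA : Q × A → Q) (fB : Q → B) (u : Discontinuum A Q B) (i : ℤ)
    (h1 : i ≠ -1) (h0 : i ≠ 0) : (autMap fA fB u).1 i = u.1 (i + 1) := by
  simp only [autMap]
  rw [if_neg h1, if_neg h0]

lemma state_autMap (fA : Q × A → Q) (fB : Q → B) (u : Discontinuum A Q B) :
    (autMap fA fB u).state = fA (u.state, u.input) := by
  apply Discontinuum.state_eq
  simp only [autMap]
  norm_num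

/-- Projection extracting the state from the letter at coordinate 0. -/
noncomputable def stProj [Nonempty Q] : A ⊕ Q ⊕ B → Q
  | Sum.inr (Sum.inl q) => q
  | _ => Classical.arbitrary Q

/-- Projection extracting the input from the letter at coordinate 1. -/
noncomputable def inProj [Nonempty A] : A ⊕ Q ⊕ B → A
  | Sum.inl a => a
  | _ => Classical.arbitrary A

lemma state_eq_stProj [Nonempty Q] (u : Discontinuum A Q B) :
    u.state = stProj (u.1 0) := by rw [u.state_spec]; rfl

lemma input_eq_inProj [Nonempty A] (u : Discontinuum A Q B) :
    u.input = inProj (u.1 1) := by rw [u.input_spec]; rfl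

lemma continuous_autMap [Nonempty A] [Nonempty Q] (fA : Q × A → Q) (fB : Q → B) :
    Continuous (autMap fA fB : Discontinuum A Q B → Discontinuum A Q B) := by
  letI : TopologicalSpace (A ⊕ Q ⊕ B) := ⊥
  haveI : DiscreteTopology (A ⊕ Q ⊕ B) := ⟨rfl⟩
  have hval : Continuous (Subtype.val : Discontinuum A Q B → (ℤ → A ⊕ Q ⊕ B)) := by
    exact continuous_subtype_val
  apply Continuous.subtype_mk
  apply continuous_pi
  intro i
  by_cases h1 : i = -1
  · have hc : Continuous ((fun s : A ⊕ Q ⊕ B => (Sum.inr (Sum.inr (fB (stProj s))) : A ⊕ Q ⊕ B)) ∘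
        (fun u : Discontinuum A Q B => u.1 0)) :=
      continuous_of_discreteTopology.comp
        ((continuous_apply (0:ℤ)).comp hval)
    refine hc.congr fun u => ?_
    rw [if_pos h1]
    simp [comp_apply, ← state_eq_stProj]
  · by_cases h0 : i = 0
    · have hc : Continuous ((fun p : (A ⊕ Q ⊕ B) × (A ⊕ Q ⊕ B) =>
          (Sum.inr (Sum.inl (fA (stProj p.1, inProj p.2))) : A ⊕ Q ⊕ B)) ∘
          (fun u : Discontinuum A Q B => (u.1 0, u.1 1))) :=
        continuous_of_discreteTopology.comp
          (((continuous_apply (0:ℤ)).comp hval).prodMk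
            ((continuous_apply (1:ℤ)).comp hval))
      refine hc.congr fun u => ?_
      rw [if_neg h1, if_pos h0]
      simp [comp_apply, ← state_eq_stProj, ← input_eq_inProj]
    · have hc : Continuous (fun u : Discontinuum A Q B => u.1 (i + 1)) :=
        (continuous_apply (i + 1)).comp hval
      refine hc.congr fun u => ?_
      rw [if_neg h1, if_neg h0]

lemma continuous_state [Nonempty Q] [TopologicalSpace Q] :
    Continuous (Discontinuum.state : Discontinuum A Q B → Q) := by
  letI : TopologicalSpace (A ⊕ Q ⊕ B) := ⊥
  haveI : DiscreteTopology (A ⊕ Q ⊕ B) := ⟨rfl⟩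
  have hval : Continuous (Subtype.val : Discontinuum A Q B → (ℤ → A ⊕ Q ⊕ B)) := by
    exact continuous_subtype_val
  have hc : Continuous ((stProj : A ⊕ Q ⊕ B → Q) ∘ (fun u : Discontinuum A Q B => u.1 0)) :=
    continuous_of_discreteTopology.comp
      ((continuous_apply (0:ℤ)).comp hval)
  exact hc.congr fun u => (state_eq_stProj u).symm

end Aux

/-- The transition function for the automaton realizing the SFT for matrix `M`. -/
noncomputable def sftNext {A : Type*} (M : A → A → Bool)
    (hM : ∀ a : A, ∃ b : A, M a b = true) : A × A → A :=
  fun p => if M p.1 p.2 = true then p.2 else (hM p.1).choose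

lemma sftNext_spec {A : Type*} (M : A → A → Bool) (hM : ∀ a : A, ∃ b : A, M a b = true)
    (q a : A) : M q (sftNext M hM (q, a)) = true := by
  unfold sftNext
  dsimp only
  split
  · assumption
  · exact (hM q).choose_spec

lemma sftNext_eq {A : Type*} (M : A → A → Bool) (hM : ∀ a : A, ∃ b : A, M a b = true)
    {q a : A} (h : M q a = true) : sftNext M hM (q, a) = a := by
  simp [sftNext, h]

/-- A subshift of finite type is a factor of a finite automaton. -/
theorem sft_isFactorOfFiniteAutomaton (A : Type) [Fintype A] [Nonempty A]
    [TopologicalSpace A] [DiscreteTopology A] (M : A → A → Bool)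
    (hM : ∀ a : A, ∃ b : A, M a b = true) :
    ∃ h : Set.MapsTo (fun (u : ℕ → A) (i : ℕ) => u (i + 1))
        {u : ℕ → A | ∀ i : ℕ, M (u i) (u (i + 1)) = true}
        {u : ℕ → A | ∀ i : ℕ, M (u i) (u (i + 1)) = true},
      IsFactorOfFiniteAutomaton (Set.MapsTo.restrict _ _ _ h) := by
  classical
  have hMapsTo : Set.MapsTo (fun (u : ℕ → A) (i : ℕ) => u (i + 1))
      {u : ℕ → A | ∀ i : ℕ, M (u i) (u (i + 1)) = true}
      {u : ℕ → A | ∀ i : ℕ, M (u i) (u (i + 1)) = true} :=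
    fun u hu i => hu (i + 1)
  refine ⟨hMapsTo, ?_⟩
  set fA : A × A → A := sftNext M hM with hfA
  set fB : A → A := id with hfB
  set f : Discontinuum A A A → Discontinuum A A A := autMap fA fB with hf
  -- the factor map
  have hmem : ∀ u : Discontinuum A A A,
      (fun i : ℕ => (f^[i] u).state) ∈ {u : ℕ → A | ∀ i : ℕ, M (u i) (u (i + 1)) = true} := by
    intro u i
    show M (f^[i] u).state (f^[i + 1] u).state = true
    have h2 : f^[i + 1] u = f (f^[i] u) := Function.iterate_succ_apply' f i u
    rw [h2, hf, state_autMap]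
    exact sftNext_spec M hM _ _
  set φ : Discontinuum A A A → {u : ℕ → A | ∀ i : ℕ, M (u i) (u (i + 1)) = true} :=
    fun u => ⟨fun i => (f^[i] u).state, hmem u⟩ with hφ
  refine ⟨A, A, A, inferInstance, inferInstance, inferInstance, inferInstance, inferInstance,
    inferInstance, fA, fB, φ, ?_, ?_, ?_⟩
  · -- continuity
    apply Continuous.subtype_mk
    apply continuous_pi
    intro i
    exact continuous_state.comp ((continuous_autMap fA fB).iterate i)
  · -- surjectivity
    rintro ⟨v, hv⟩
    set w : ℤ → A ⊕ A ⊕ A := fun i =>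
      if i = 0 then Sum.inr (Sum.inl (v 0))
      else if 0 < i then Sum.inl (v i.toNat)
      else Sum.inr (Sum.inr (v 0)) with hw
    have hwmem : (∀ i : ℤ, 0 < i → ∃ a : A, w i = Sum.inl a) ∧
        (∃ q : A, w 0 = Sum.inr (Sum.inl q)) ∧
        (∀ i : ℤ, i < 0 → ∃ b : A, w i = Sum.inr (Sum.inr b)) := by
      refine ⟨fun i hi => ⟨v i.toNat, ?_⟩, ⟨v 0, by simp [hw]⟩, fun i hi => ⟨v 0, ?_⟩⟩
      · simp only [hw]
        rw [if_neg (by omega : ¬ i = 0), if_pos hi]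
      · simp only [hw]
        rw [if_neg (by omega : ¬ i = 0), if_neg (by omega : ¬ 0 < i)]
    set u : Discontinuum A A A := ⟨w, hwmem⟩ with hu
    have key : ∀ n : ℕ, (f^[n] u).state = v n ∧
        ∀ j : ℤ, 0 < j → (f^[n] u).1 j = Sum.inl (v (j.toNat + n)) := by
      intro n
      induction n with
      | zero =>
        constructor
        · exact Discontinuum.state_eq (by rw [Function.iterate_zero_apply]; show w 0 = _; simp [hw])
        · intro j hj
          rw [Function.iterate_zero_apply]
          show w j = Sum.inl (v (j.toNat + 0))
          simp only [hw]
          rw [if_neg (by omega : ¬ j = 0), if_pos hj, Nat.add_zero]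
      | succ n ih =>
        have hit : f^[n + 1] u = f (f^[n] u) := Function.iterate_succ_apply' f n u
        have hinput : (f^[n] u).input = v (n + 1) := by
          apply Discontinuum.input_eq
          have := ih.2 1 one_pos
          rw [this]
          norm_num [Nat.add_comm]
        constructor
        · rw [hit, hf, state_autMap, ih.1, hinput, hfA, sftNext_eq M hM (hv n)]
        · intro j hj
          rw [hit]
          have h1 : j ≠ -1 := by omega
          have h0 : j ≠ 0 := by omega
          rw [hf, autMap_coord fA fB _ j h1 h0, ih.2 (j + 1) (by omega)]
          congr 2
          omega
    refine ⟨u, ?_⟩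
    apply Subtype.ext
    funext n
    exact (key n).1
  · -- equivariance
    funext u
    apply Subtype.ext
    funext i
    show (φ u).1 (i + 1) = (φ (f u)).1 i
    show (f^[i + 1] u).state = (f^[i] (f u)).state
    rw [Function.iterate_succ_apply]
end

section
/- Let X be the discontinuum over nonempty finite sets (A,Q,B) and f : X → X a continuous map such that for every n > 0 the language L(f,α_n) generated by the partition α_n of X into n-cylinders is a regular language. Then (X,f) is clopen-regular, i.e. L(f,β) is regular for every finite cover β of X by clopen sets. -/
open Set Function Topology

/-- The language generated by a family `α` of subsets of `X`: all finite words
`u ∈ α*` such that some `x ∈ X` has itinerary `u`, i.e. `f^i(x) ∈ uᵢ` for `i < |u|`. -/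
def genLanguage {X : Type*} (f : X → X) (α : Set (Set X)) : Language ↥α :=
  {w : List ↥α | ∃ x : X, ∀ i : Fin w.length, f^[(i : ℕ)] x ∈ (w.get i : Set X)}

/-- A dynamical system is clopen-regular if the language generated by every finite
clopen cover is regular. -/
def ClopenRegular {X : Type*} [TopologicalSpace X] (f : X → X) : Prop :=
  ∀ α : Set (Set X), α.Finite → (∀ S ∈ α, IsClopen S) → ⋃₀ α = Set.univ →
    (genLanguage f α).IsRegular

/-- The `n`-cylinder of a point `w` of the discontinuum. -/
def cylinder {A Q B : Type*} (w : Discontinuum A Q B) (n : ℕ) :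
    Set (Discontinuum A Q B) :=
  {v | ∀ i : ℤ, |i| ≤ (n : ℤ) → v.1 i = w.1 i}

/-- The partition of the discontinuum into `n`-cylinders. -/
def cylinderPartition (A Q B : Type*) (n : ℕ) : Set (Set (Discontinuum A Q B)) :=
  {S | ∃ w : Discontinuum A Q B, S = cylinder w n}

set_option linter.unusedSectionVars false

section Aux
variable {A Q B : Type} [Fintype A] [Fintype Q] [Fintype B]

lemma mem_cylinder_self (w : Discontinuum A Q B) (n : ℕ) : w ∈ cylinder w n :=
  fun _ _ => rfl

lemma cylinder_mono {w : Discontinuum A Q B} {m n : ℕ} (h : m ≤ n) :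
    cylinder w n ⊆ cylinder w m :=
  fun _ hv i hi => hv i (hi.trans (by exact_mod_cast h))

lemma cylinder_subset_of_mem {w v : Discontinuum A Q B} {n : ℕ} (h : v ∈ cylinder w n) :
    cylinder v n ⊆ cylinder w n :=
  fun _ hu i hi => (hu i hi).trans (h i hi)

lemma isClopen_cylinder (w : Discontinuum A Q B) (n : ℕ) : IsClopen (cylinder w n) := by
  letI : TopologicalSpace (A ⊕ Q ⊕ B) := ⊥
  haveI : DiscreteTopology (A ⊕ Q ⊕ B) := ⟨rfl⟩
  have h : cylinder w n =
      ⋂ i ∈ Finset.Icc (-(n : ℤ)) (n : ℤ),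
        (fun v : Discontinuum A Q B => v.1 i) ⁻¹' {w.1 i} := by
    ext v
    simp only [cylinder, mem_setOf_eq, mem_iInter, mem_preimage, mem_singleton_iff,
      Finset.mem_Icc]
    constructor
    · intro hv i hi
      exact hv i (abs_le.mpr hi)
    · intro hv i hi
      exact hv i (abs_le.mp hi)
  rw [h]
  apply isClopen_biInter_finset
  intro i _
  have hc : Continuous (fun v : Discontinuum A Q B => v.1) := continuous_subtype_val
  exact (isClopen_discrete _).preimage ((continuous_apply i).comp hc)

lemma exists_cylinder_subset {U : Set (Discontinuum A Q B)} (hU : IsOpen U)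
    {x : Discontinuum A Q B} (hx : x ∈ U) : ∃ n : ℕ, cylinder x n ⊆ U := by
  letI : TopologicalSpace (A ⊕ Q ⊕ B) := ⊥
  obtain ⟨V, hV, rfl⟩ := isOpen_induced_iff.mp hU
  obtain ⟨I, u, hu, hIu⟩ := isOpen_pi_iff.mp hV x.1 hx
  refine ⟨I.sup Int.natAbs, fun v hv => ?_⟩
  apply hIu
  intro i hi
  have h1 : |i| ≤ ((I.sup Int.natAbs : ℕ) : ℤ) := by
    rw [Int.abs_eq_natAbs]
    exact_mod_cast Finset.le_sup hi
  rw [hv i h1]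
  exact (hu i hi).2

instance : CompactSpace (Discontinuum A Q B) := by
  letI : TopologicalSpace (A ⊕ Q ⊕ B) := ⊥
  haveI : DiscreteTopology (A ⊕ Q ⊕ B) := ⟨rfl⟩
  have hset : {u : ℤ → A ⊕ Q ⊕ B |
      (∀ i : ℤ, 0 < i → ∃ a : A, u i = Sum.inl a) ∧
      (∃ q : Q, u 0 = Sum.inr (Sum.inl q)) ∧
      (∀ i : ℤ, i < 0 → ∃ b : B, u i = Sum.inr (Sum.inr b))} =
      ⋂ i : ℤ, (fun u : ℤ → A ⊕ Q ⊕ B => u i) ⁻¹'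
        (if 0 < i then {s | ∃ a : A, s = Sum.inl a}
         else if i = 0 then {s | ∃ q : Q, s = Sum.inr (Sum.inl q)}
         else {s | ∃ b : B, s = Sum.inr (Sum.inr b)}) := by
    ext u
    simp only [mem_setOf_eq, mem_iInter, mem_preimage]
    constructor
    · rintro ⟨h1, h2, h3⟩ i
      split_ifs with hi hi0
      · exact h1 i hi
      · subst hi0; exact h2
      · exact h3 i (by omega)
    · intro h
      refine ⟨fun i hi => ?_, ?_, fun i hi => ?_⟩
      · have := h i; rwa [if_pos hi] at this
      · have := h 0; rwa [if_neg (by omega), if_pos rfl] at this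
      · have := h i; rwa [if_neg (by omega), if_neg (by omega)] at this
  have hclosed : IsClosed {u : ℤ → A ⊕ Q ⊕ B |
      (∀ i : ℤ, 0 < i → ∃ a : A, u i = Sum.inl a) ∧
      (∃ q : Q, u 0 = Sum.inr (Sum.inl q)) ∧
      (∀ i : ℤ, i < 0 → ∃ b : B, u i = Sum.inr (Sum.inr b))} := by
    rw [hset]
    exact isClosed_iInter fun i => (isClosed_discrete _).preimage (continuous_apply i)
  exact isCompact_iff_compactSpace.mp hclosed.isCompact

lemma exists_uniform_refinement {S : Set (Discontinuum A Q B)} (hS : IsClopen S) :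
    ∃ N : ℕ, ∀ x ∈ S, cylinder x N ⊆ S := by
  have hn : ∀ x : S, ∃ n : ℕ, cylinder x.1 n ⊆ S := fun x =>
    exists_cylinder_subset hS.2 x.2
  choose n hn using hn
  obtain ⟨t, ht⟩ := (hS.1.isCompact).elim_nhds_subcover'
    (fun x hx => cylinder x (n ⟨x, hx⟩))
    (fun x hx => (isClopen_cylinder x (n ⟨x, hx⟩)).2.mem_nhds (mem_cylinder_self _ _))
  refine ⟨t.sup (fun x => n ⟨x.1, x.2⟩), fun x hx v hv => ?_⟩
  obtain ⟨y, hyt, hy⟩ := Set.mem_iUnion₂.mp (ht hx)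
  have h1 : cylinder x (t.sup (fun x => n ⟨x.1, x.2⟩)) ⊆ cylinder x (n ⟨y.1, y.2⟩) :=
    cylinder_mono (Finset.le_sup (f := fun x => n ⟨x.1, x.2⟩) hyt)
  exact hn ⟨y.1, y.2⟩ (cylinder_subset_of_mem hy (h1 hv))

lemma cylinderPartition_finite (n : ℕ) : (cylinderPartition A Q B n).Finite := by
  haveI : Finite {i : ℤ // |i| ≤ (n : ℤ)} := by
    apply Set.Finite.to_subtype (s := {i : ℤ | |i| ≤ (n : ℤ)})
    exact (Set.finite_Icc (-(n : ℤ)) (n : ℤ)).subset (fun i hi => by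
      simp only [mem_Icc]; exact abs_le.mp hi)
  apply Set.Finite.subset (Set.finite_range
    (fun p : {i : ℤ // |i| ≤ (n : ℤ)} → A ⊕ Q ⊕ B =>
      {v : Discontinuum A Q B | ∀ i : {i : ℤ // |i| ≤ (n : ℤ)}, v.1 i = p i}))
  rintro S ⟨w, rfl⟩
  refine ⟨fun i => w.1 i, ?_⟩
  ext v
  simp only [cylinder, mem_setOf_eq]
  exact ⟨fun h i hi => h ⟨i, hi⟩, fun h i => h i.1 i.2⟩

end Aux

lemma nfa_evalFrom_iff {α β : Type*} {σ : Type} (M : DFA β σ) (r : α → β → Prop)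
    (N : NFA α σ) (hstep : ∀ s a, N.step s a = {s' | ∃ b, r a b ∧ s' = M.step s b})
    (w : List α) (S : Set σ) (q : σ) :
    q ∈ N.evalFrom S w ↔ ∃ s ∈ S, ∃ c : List β, List.Forall₂ r w c ∧ M.evalFrom s c = q := by
  induction w generalizing S with
  | nil =>
    simp only [NFA.evalFrom_nil]
    constructor
    · intro hq
      exact ⟨q, hq, [], List.Forall₂.nil, rfl⟩
    · rintro ⟨s, hs, c, hc, rfl⟩
      rw [List.forall₂_nil_left_iff] at hc
      subst hc
      exact hs
  | cons a w ih =>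
    have hrw : N.evalFrom S (a :: w) = N.evalFrom (N.stepSet S a) w := rfl
    rw [hrw, ih]
    constructor
    · rintro ⟨s, hs, c, hc, rfl⟩
      rw [NFA.mem_stepSet] at hs
      obtain ⟨t, ht, hst⟩ := hs
      rw [hstep] at hst
      obtain ⟨b, hb, rfl⟩ := hst
      exact ⟨t, ht, b :: c, List.Forall₂.cons hb hc, rfl⟩
    · rintro ⟨s, hs, c, hc, rfl⟩
      cases hc with
      | cons hb hc' =>
        refine ⟨M.step s _, NFA.mem_stepSet.mpr ⟨s, hs, ?_⟩, _, hc', rfl⟩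
        rw [hstep]
        exact ⟨_, hb, rfl⟩
/-- If the language generated by the partition of `n`-cylinders is regular for each
`n > 0`, then the dynamical system on the discontinuum is clopen-regular. -/
theorem clopenRegular_of_cylinders (A Q B : Type)
    [Fintype A] [Fintype Q] [Fintype B] [Nonempty A] [Nonempty Q] [Nonempty B]
    (f : Discontinuum A Q B → Discontinuum A Q B) (hf : Continuous f)
    (hreg : ∀ n : ℕ, 0 < n → (genLanguage f (cylinderPartition A Q B n)).IsRegular) :
    ClopenRegular f := by
  classical
  intro α hfin hcl _hcover
  haveI := hfin.fintype
  have hNex : ∀ S : ↥α, ∃ N : ℕ, ∀ x ∈ (S : Set (Discontinuum A Q B)),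
      cylinder x N ⊆ (S : Set (Discontinuum A Q B)) :=
    fun S => exists_uniform_refinement (hcl S.1 S.2)
  choose N hN using hNex
  set n : ℕ := Finset.univ.sup N + 1 with hndef
  have hn0 : 0 < n := Nat.succ_pos _
  have href : ∀ (S : ↥α) (x : Discontinuum A Q B), x ∈ (S : Set (Discontinuum A Q B)) →
      cylinder x n ⊆ (S : Set (Discontinuum A Q B)) := fun S x hx =>
    (cylinder_mono (Nat.le_succ_of_le (Finset.le_sup (Finset.mem_univ S)))).trans (hN S x hx)
  obtain ⟨σ, instσ, M, hM⟩ := hreg n hn0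
  let r : ↥α → ↥(cylinderPartition A Q B n) → Prop := fun a c =>
    (c : Set (Discontinuum A Q B)) ⊆ (a : Set (Discontinuum A Q B))
  let Nfa : NFA ↥α σ := ⟨fun s a => {s' | ∃ b, r a b ∧ s' = M.step s b}, {M.start}, M.accept⟩
  have key : ∀ w : List ↥α, w ∈ genLanguage f α ↔
      ∃ c : List ↥(cylinderPartition A Q B n), List.Forall₂ r w c ∧
        c ∈ genLanguage f (cylinderPartition A Q B n) := by
    intro w
    constructor
    · rintro ⟨x, hx⟩
      refine ⟨List.ofFn (fun i : Fin w.length =>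
        (⟨cylinder (f^[(i : ℕ)] x) n, f^[(i : ℕ)] x, rfl⟩ :
          ↥(cylinderPartition A Q B n))), ?_, ?_⟩
      · rw [List.forall₂_iff_get]
        refine ⟨by simp, fun i h1 h2 => ?_⟩
        rw [List.get_ofFn]
        exact href (w.get ⟨i, h1⟩) _ (hx ⟨i, h1⟩)
      · refine ⟨x, fun i => ?_⟩
        have h2 := i.2
        rw [List.get_ofFn]
        simp only [Fin.coe_cast]
        exact mem_cylinder_self _ _
    · rintro ⟨c, hc, x, hx⟩
      refine ⟨x, fun i => ?_⟩
      rw [List.forall₂_iff_get] at hc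
      have hlen : (i : ℕ) < c.length := hc.1 ▸ i.2
      exact hc.2 i i.2 hlen (hx ⟨i, hlen⟩)
  have hacc : Nfa.accepts = genLanguage f α := by
    ext w
    rw [NFA.mem_accepts]
    constructor
    · rintro ⟨q, hq, hqe⟩
      rw [nfa_evalFrom_iff M r Nfa (fun _ _ => rfl)] at hqe
      obtain ⟨s, hs, c, hcr, hev⟩ := hqe
      rw [Set.mem_singleton_iff] at hs
      subst hs
      have hcM : c ∈ M.accepts := by
        have heq : M.eval c = q := hev
        rw [DFA.mem_accepts, heq]
        exact hq
      rw [hM] at hcM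
      exact (key w).mpr ⟨c, hcr, hcM⟩
    · intro hw
      obtain ⟨c, hcr, hcL⟩ := (key w).mp hw
      rw [← hM] at hcL
      refine ⟨M.evalFrom M.start c, hcL, ?_⟩
      rw [nfa_evalFrom_iff M r Nfa (fun _ _ => rfl)]
      exact ⟨M.start, rfl, c, hcr, rfl⟩
  haveI : Finite σ := Finite.of_fintype σ
  exact ⟨Set σ, Fintype.ofFinite _, Nfa.toDFA, by rw [NFA.toDFA_correct, hacc]⟩
end

section
/- A factor of a clopen-regular dynamical system is clopen-regular: if φ : (X,f) → (Y,g) is a surjective homomorphism of dynamical systems and (X,f) is clopen-regular, then (Y,g) is clopen-regular. -/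
open Set Function Topology

/-- A factor of a clopen-regular dynamical system is clopen-regular. -/
theorem clopenRegular_of_factor {X Y : Type*} [MetricSpace X] [CompactSpace X]
    [MetricSpace Y] [CompactSpace Y] (f : X → X) (g : Y → Y) (φ : X → Y)
    (hf : Continuous f) (hg : Continuous g) (hφ : Continuous φ)
    (hsurj : Function.Surjective φ) (hcomm : g ∘ φ = φ ∘ f)
    (hreg : ClopenRegular f) : ClopenRegular g := by
  have hsc : Function.Semiconj φ f g := fun x => (congrFun hcomm x).symm
  have hit : ∀ (n : ℕ) (x : X), φ (f^[n] x) = g^[n] (φ x) := by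
    intro n x
    exact (hsc.iterate_right n) x
  intro α hαfin hαclopen hαcover
  -- the pulled-back cover of X
  set β : Set (Set X) := (fun S => φ ⁻¹' S) '' α with hβ
  have hβfin : β.Finite := hαfin.image _
  have hβclopen : ∀ S ∈ β, IsClopen S := by
    rintro S ⟨T, hT, rfl⟩
    exact (hαclopen T hT).preimage hφ
  have hβcover : ⋃₀ β = Set.univ := by
    apply Set.eq_univ_of_forall
    intro x
    have : φ x ∈ ⋃₀ α := hαcover ▸ Set.mem_univ _
    obtain ⟨T, hT, hxT⟩ := this
    exact ⟨φ ⁻¹' T, ⟨T, hT, rfl⟩, hxT⟩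
  obtain ⟨σ, hσ, M, hM⟩ := hreg β hβfin hβclopen hβcover
  -- the alphabet map
  let e : ↥α → ↥β := fun S => ⟨φ ⁻¹' (S : Set Y), ⟨S, S.2, rfl⟩⟩
  refine ⟨σ, hσ, M.comap e, ?_⟩
  rw [DFA.accepts_comap, hM]
  ext w
  constructor
  · rintro ⟨x, hx⟩
    refine ⟨φ x, fun i => ?_⟩
    have := hx ⟨i, by simpa using i.2⟩
    simp only [List.get_eq_getElem, List.getElem_map] at this ⊢
    have h2 : f^[(i : ℕ)] x ∈ φ ⁻¹' (w.get ⟨i, by simpa using i.2⟩ : Set Y) := this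
    have := Set.mem_preimage.mp h2
    rwa [hit] at this
  · rintro ⟨y, hy⟩
    obtain ⟨x, rfl⟩ := hsurj y
    refine ⟨x, fun i => ?_⟩
    have := hy ⟨i, by simpa using i.2⟩
    simp only [List.get_eq_getElem, List.getElem_map]
    show f^[(i : ℕ)] x ∈ φ ⁻¹' (w.get ⟨i, by simpa using i.2⟩ : Set Y)
    rw [Set.mem_preimage, hit]
    exact this
end
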